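/- Let σ > 0 and let p(z; w) = (2πσ²)^{-1/2} exp(−(z − w)²/(2σ²)). Let w, ŵ ∈ ℝ with |ŵ − w| ≤ δ for some δ ≥ 0. Then for every R ≥ δ, the L¹ distance between the two Gaussian densities satisfies ∫_ℝ |p(z; ŵ) − p(z; w)| dz ≤ 2Rδ·e^{-1/2}/(σ·√(2πσ²)) + 2·exp(−(R−δ)²/(2σ²)) + 2·exp(−R²/(2σ²)). -/

import Mathlib

open Real MeasureTheory

/-- The Gaussian density with mean `w` and variance `σ²`, as a function of `z`. -/
noncomputable def gaussPdf (σ z w : ℝ) : ℝ :=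
  (Real.sqrt (2 * Real.pi * σ ^ 2))⁻¹ * Real.exp (-(z - w) ^ 2 / (2 * σ ^ 2))

lemma gaussPdf_eq (σ m : ℝ) :
    (fun z => gaussPdf σ z m) = ProbabilityTheory.gaussianPDFReal m ⟨σ^2, sq_nonneg σ⟩ := by
  funext z
  simp [gaussPdf, ProbabilityTheory.gaussianPDFReal]
  rfl

lemma gaussPdf_nonneg (σ z m : ℝ) : 0 ≤ gaussPdf σ z m := by
  unfold gaussPdf
  positivity

lemma gaussPdf_integrable (σ m : ℝ) : Integrable (fun z => gaussPdf σ z m) := by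
  rw [gaussPdf_eq]
  exact ProbabilityTheory.integrable_gaussianPDFReal _ _

lemma gaussPdf_integral (σ m : ℝ) (hσ : 0 < σ) : ∫ z, gaussPdf σ z m = 1 := by
  rw [gaussPdf_eq]
  exact ProbabilityTheory.integral_gaussianPDFReal_eq_one m (by
    intro h
    have : (σ:ℝ)^2 = 0 := congrArg NNReal.toReal h
    nlinarith)

lemma gaussPdf_shift (σ : ℝ) (hσ : 0 < σ) (m t z : ℝ) :
    Real.exp (t * (z - m)) * gaussPdf σ z m
      = Real.exp (t ^ 2 * σ ^ 2 / 2) * gaussPdf σ z (m + t * σ ^ 2) := by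
  unfold gaussPdf
  rw [mul_left_comm, ← Real.exp_add, mul_left_comm, ← Real.exp_add]
  congr 2
  have h2 : σ ^ 2 ≠ 0 := by positivity
  field_simp
  ring

lemma gaussPdf_exp_mul_integrable (σ : ℝ) (hσ : 0 < σ) (m t : ℝ) :
    Integrable (fun z => Real.exp (t * (z - m)) * gaussPdf σ z m) := by
  simp_rw [gaussPdf_shift σ hσ m t]
  exact (gaussPdf_integrable σ (m + t * σ ^ 2)).const_mul _

lemma gaussPdf_integral_exp_mul (σ : ℝ) (hσ : 0 < σ) (m t : ℝ) :
    ∫ z, Real.exp (t * (z - m)) * gaussPdf σ z m = Real.exp (t ^ 2 * σ ^ 2 / 2) := by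
  simp_rw [gaussPdf_shift σ hσ m t]
  rw [integral_const_mul, gaussPdf_integral _ _ hσ, mul_one]

lemma gaussPdf_tail_upper (σ : ℝ) (hσ : 0 < σ) (m r : ℝ) (hr : 0 ≤ r) :
    ∫ z in Set.Ici (m + r), gaussPdf σ z m ≤ Real.exp (-r ^ 2 / (2 * σ ^ 2)) := by
  set t := r / σ ^ 2 with ht
  have ht0 : 0 ≤ t := by positivity
  have hint := gaussPdf_exp_mul_integrable σ hσ m t
  calc ∫ z in Set.Ici (m + r), gaussPdf σ z m
      ≤ ∫ z in Set.Ici (m + r), Real.exp (-(t * r)) * (Real.exp (t * (z - m)) * gaussPdf σ z m) := by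
        apply setIntegral_mono_on (gaussPdf_integrable σ m).integrableOn
          (hint.const_mul _).integrableOn measurableSet_Ici
        intro z hz
        rw [← mul_assoc, ← Real.exp_add]
        nth_rewrite 1 [← one_mul (gaussPdf σ z m)]
        apply mul_le_mul_of_nonneg_right _ (gaussPdf_nonneg σ z m)
        rw [← Real.exp_zero]
        apply Real.exp_le_exp.2
        have : m + r ≤ z := hz
        nlinarith
    _ ≤ ∫ z, Real.exp (-(t * r)) * (Real.exp (t * (z - m)) * gaussPdf σ z m) := by
        apply setIntegral_le_integral (hint.const_mul _)
        filter_upwards with z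
        exact mul_nonneg (Real.exp_pos _).le
          (mul_nonneg (Real.exp_pos _).le (gaussPdf_nonneg _ _ _))
    _ = Real.exp (-(t * r)) * Real.exp (t ^ 2 * σ ^ 2 / 2) := by
        rw [integral_const_mul, gaussPdf_integral_exp_mul σ hσ]
    _ = Real.exp (-r ^ 2 / (2 * σ ^ 2)) := by
        rw [← Real.exp_add]
        congr 1
        have h2 : σ ^ 2 ≠ 0 := by positivity
        field_simp [ht]
        have htr : t * σ ^ 2 = r := by rw [ht]; exact div_mul_cancel₀ r h2
        linear_combination (t * σ ^ 2 - r) * htr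

lemma gaussPdf_tail_lower (σ : ℝ) (hσ : 0 < σ) (m r : ℝ) (hr : 0 ≤ r) :
    ∫ z in Set.Iic (m - r), gaussPdf σ z m ≤ Real.exp (-r ^ 2 / (2 * σ ^ 2)) := by
  set t := -(r / σ ^ 2) with ht
  have ht0 : t ≤ 0 := by rw [ht]; simp; positivity
  have hint := gaussPdf_exp_mul_integrable σ hσ m t
  calc ∫ z in Set.Iic (m - r), gaussPdf σ z m
      ≤ ∫ z in Set.Iic (m - r), Real.exp (t * r) * (Real.exp (t * (z - m)) * gaussPdf σ z m) := by
        apply setIntegral_mono_on (gaussPdf_integrable σ m).integrableOn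
          (hint.const_mul _).integrableOn measurableSet_Iic
        intro z hz
        rw [← mul_assoc, ← Real.exp_add]
        nth_rewrite 1 [← one_mul (gaussPdf σ z m)]
        apply mul_le_mul_of_nonneg_right _ (gaussPdf_nonneg σ z m)
        rw [← Real.exp_zero]
        apply Real.exp_le_exp.2
        have : z ≤ m - r := hz
        nlinarith
    _ ≤ ∫ z, Real.exp (t * r) * (Real.exp (t * (z - m)) * gaussPdf σ z m) := by
        apply setIntegral_le_integral (hint.const_mul _)
        filter_upwards with z
        exact mul_nonneg (Real.exp_pos _).le
          (mul_nonneg (Real.exp_pos _).le (gaussPdf_nonneg _ _ _))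
    _ = Real.exp (t * r) * Real.exp (t ^ 2 * σ ^ 2 / 2) := by
        rw [integral_const_mul, gaussPdf_integral_exp_mul σ hσ]
    _ = Real.exp (-r ^ 2 / (2 * σ ^ 2)) := by
        rw [← Real.exp_add]
        congr 1
        have h2 : σ ^ 2 ≠ 0 := by positivity
        field_simp [ht]
        have htr : t * σ ^ 2 = -r := by rw [ht, neg_mul, div_mul_cancel₀ r h2]
        linear_combination (t * σ ^ 2 + r) * htr

lemma abs_mul_exp_le (σ x : ℝ) (hσ : 0 < σ) :
    |x| * Real.exp (-x ^ 2 / (2 * σ ^ 2)) ≤ σ * Real.exp (-1 / 2) := by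
  have h1 : |x| ≤ σ * (1 / 2 + x ^ 2 / (2 * σ ^ 2)) := by
    have hx := sq_abs x
    have h := sq_nonneg (|x| - σ)
    have hq : σ * (x ^ 2 / (2 * σ ^ 2)) = x ^ 2 / (2 * σ) := by
      field_simp
    rw [mul_add, hq]
    have key : 2 * σ * |x| ≤ σ ^ 2 + x ^ 2 := by nlinarith
    calc |x| = (2 * σ * |x|) / (2 * σ) := by field_simp
      _ ≤ (σ ^ 2 + x ^ 2) / (2 * σ) := by
          exact div_le_div_of_nonneg_right key (by positivity)
      _ = σ * (1 / 2) + x ^ 2 / (2 * σ) := by field_simp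
  have h2 : 1 / 2 + x ^ 2 / (2 * σ ^ 2) ≤ Real.exp (x ^ 2 / (2 * σ ^ 2) - 1 / 2) := by
    have := Real.add_one_le_exp (x ^ 2 / (2 * σ ^ 2) - 1 / 2)
    linarith
  calc |x| * Real.exp (-x ^ 2 / (2 * σ ^ 2))
      ≤ σ * Real.exp (x ^ 2 / (2 * σ ^ 2) - 1 / 2) * Real.exp (-x ^ 2 / (2 * σ ^ 2)) := by
        apply mul_le_mul_of_nonneg_right _ (Real.exp_pos _).le
        exact h1.trans (mul_le_mul_of_nonneg_left h2 hσ.le)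
    _ = σ * Real.exp (-1 / 2) := by
        rw [mul_assoc, ← Real.exp_add]
        congr 2
        ring

lemma gaussPdf_hasDerivAt (σ : ℝ) (hσ : 0 < σ) (z u : ℝ) :
    HasDerivAt (fun u => gaussPdf σ z u)
      ((Real.sqrt (2 * Real.pi * σ ^ 2))⁻¹ *
        (Real.exp (-(z - u) ^ 2 / (2 * σ ^ 2)) * ((z - u) / σ ^ 2))) u := by
  have h1 : HasDerivAt (fun u : ℝ => -(z - u) ^ 2 / (2 * σ ^ 2)) ((z - u) / σ ^ 2) u := by
    have h0 : HasDerivAt (fun u : ℝ => z - u) (-1) u := (hasDerivAt_id u).const_sub z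
    have h2 := ((h0.fun_pow 2).fun_neg).div_const (2 * σ ^ 2)
    refine h2.congr_deriv ?_
    have : σ ^ 2 ≠ 0 := by positivity
    ring
  exact (h1.exp).const_mul _

lemma gaussPdf_lip (σ : ℝ) (hσ : 0 < σ) (z w wh : ℝ) :
    |gaussPdf σ z wh - gaussPdf σ z w| ≤
      |wh - w| * (Real.exp (-1 / 2) / (σ * Real.sqrt (2 * Real.pi * σ ^ 2))) := by
  have hs : 0 < Real.sqrt (2 * Real.pi * σ ^ 2) := by
    apply Real.sqrt_pos.2
    positivity
  set C := Real.exp (-1 / 2) / (σ * Real.sqrt (2 * Real.pi * σ ^ 2)) with hC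
  have key : ∀ u ∈ Set.univ, HasDerivWithinAt (fun u => gaussPdf σ z u)
      ((Real.sqrt (2 * Real.pi * σ ^ 2))⁻¹ *
        (Real.exp (-(z - u) ^ 2 / (2 * σ ^ 2)) * ((z - u) / σ ^ 2))) Set.univ u :=
    fun u _ => (gaussPdf_hasDerivAt σ hσ z u).hasDerivWithinAt
  have bnd : ∀ u ∈ Set.univ, ‖(Real.sqrt (2 * Real.pi * σ ^ 2))⁻¹ *
      (Real.exp (-(z - u) ^ 2 / (2 * σ ^ 2)) * ((z - u) / σ ^ 2))‖ ≤ C := by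
    intro u _
    rw [Real.norm_eq_abs, abs_mul, abs_mul, abs_div]
    have h1 : |(Real.sqrt (2 * Real.pi * σ ^ 2))⁻¹| = (Real.sqrt (2 * Real.pi * σ ^ 2))⁻¹ :=
      abs_of_pos (by positivity)
    have h2 : |Real.exp (-(z - u) ^ 2 / (2 * σ ^ 2))| = Real.exp (-(z - u) ^ 2 / (2 * σ ^ 2)) :=
      abs_of_pos (Real.exp_pos _)
    have h3 : |σ ^ 2| = σ ^ 2 := abs_of_pos (by positivity)
    rw [h1, h2, h3]
    have h4 := abs_mul_exp_le σ (z - u) hσ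
    rw [hC]
    have hσ2 : (0:ℝ) ≤ σ ^ 2 := by positivity
    calc (Real.sqrt (2 * Real.pi * σ ^ 2))⁻¹ *
          (Real.exp (-(z - u) ^ 2 / (2 * σ ^ 2)) * (|z - u| / σ ^ 2))
        = (Real.sqrt (2 * Real.pi * σ ^ 2))⁻¹ *
          ((|z - u| * Real.exp (-(z - u) ^ 2 / (2 * σ ^ 2))) / σ ^ 2) := by ring
      _ ≤ (Real.sqrt (2 * Real.pi * σ ^ 2))⁻¹ * ((σ * Real.exp (-1 / 2)) / σ ^ 2) := by
          apply mul_le_mul_of_nonneg_left _ (by positivity)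
          exact div_le_div_of_nonneg_right h4 hσ2
      _ = Real.exp (-1 / 2) / (σ * Real.sqrt (2 * Real.pi * σ ^ 2)) := by
          field_simp
  have := (convex_univ : Convex ℝ (Set.univ : Set ℝ)).norm_image_sub_le_of_norm_hasDerivWithin_le
    key bnd (Set.mem_univ w) (Set.mem_univ wh)
  simpa [Real.norm_eq_abs, mul_comm] using this

/-- L¹ distance bound between two Gaussian densities whose means differ by at most `δ`:
for every `R ≥ δ`,
`∫ |p(z;wh) − p(z;w)| dz ≤ 2Rδ·e^{−1/2}/(σ√(2πσ²)) + 2exp(−(R−δ)²/(2σ²)) + 2exp(−R²/(2σ²))`. -/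
theorem gaussPdf_L1_mean_perturbation (σ : ℝ) (hσ : 0 < σ) (w wh δ R : ℝ)
    (hδ : 0 ≤ δ) (hww : |wh - w| ≤ δ) (hR : δ ≤ R) :
    (∫ z : ℝ, |gaussPdf σ z wh - gaussPdf σ z w|) ≤
      2 * R * δ * Real.exp (-1 / 2) / (σ * Real.sqrt (2 * Real.pi * σ ^ 2))
        + 2 * Real.exp (-(R - δ) ^ 2 / (2 * σ ^ 2))
        + 2 * Real.exp (-R ^ 2 / (2 * σ ^ 2)) := by
  have hR0 : 0 ≤ R := hδ.trans hR
  have hi1 := gaussPdf_integrable σ wh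
  have hi2 := gaussPdf_integrable σ w
  have hd : Integrable (fun z => |gaussPdf σ z wh - gaussPdf σ z w|) := (hi1.sub hi2).abs
  set s : Set ℝ := Set.Icc (w - R) (w + R) with hs
  have hms : MeasurableSet s := measurableSet_Icc
  rw [← integral_add_compl hms hd]
  set C := Real.exp (-1 / 2) / (σ * Real.sqrt (2 * Real.pi * σ ^ 2)) with hC
  have hCpos : 0 ≤ C := by
    rw [hC]
    have : 0 < Real.sqrt (2 * Real.pi * σ ^ 2) := Real.sqrt_pos.2 (by positivity)
    positivity
  -- central bound
  have hcen : ∫ z in s, |gaussPdf σ z wh - gaussPdf σ z w| ≤ 2 * R * δ * C := by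
    calc ∫ z in s, |gaussPdf σ z wh - gaussPdf σ z w| ≤ ∫ _z in s, δ * C := by
          apply setIntegral_mono_on hd.integrableOn
            (integrableOn_const measure_Icc_lt_top.ne) hms
          intro z _
          exact (gaussPdf_lip σ hσ z w wh).trans (mul_le_mul_of_nonneg_right hww hCpos)
      _ = (volume s).toReal * (δ * C) := by rw [setIntegral_const]; simp; exact Or.inl rfl
      _ = 2 * R * δ * C := by
          rw [hs, Real.volume_Icc]
          have h2R : w + R - (w - R) = 2 * R := by ring
          rw [h2R, ENNReal.toReal_ofReal (by linarith)]
          ring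
  -- tail bound
  have habs : ∀ z, |gaussPdf σ z wh - gaussPdf σ z w| ≤ gaussPdf σ z wh + gaussPdf σ z w := by
    intro z
    have h1 := abs_add_le (gaussPdf σ z wh) (-(gaussPdf σ z w))
    rw [abs_neg, ← sub_eq_add_neg] at h1
    rw [abs_of_nonneg (gaussPdf_nonneg σ z wh), abs_of_nonneg (gaussPdf_nonneg σ z w)] at h1
    exact h1
  have hcompl : sᶜ = Set.Iio (w - R) ∪ Set.Ioi (w + R) := by
    ext x
    simp only [hs, Set.mem_compl_iff, Set.mem_Icc, Set.mem_union, Set.mem_Iio, Set.mem_Ioi,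
      not_and_or, not_le]
  have hdisj : Disjoint (Set.Iio (w - R)) (Set.Ioi (w + R)) := by
    apply Set.disjoint_left.2
    intro x hx hx'
    simp only [Set.mem_Iio, Set.mem_Ioi] at hx hx'
    linarith
  have tail_bound : ∀ m r : ℝ, 0 ≤ r → Set.Iio (w - R) ⊆ Set.Iic (m - r) →
      Set.Ioi (w + R) ⊆ Set.Ici (m + r) →
      ∫ z in sᶜ, gaussPdf σ z m ≤ 2 * Real.exp (-r ^ 2 / (2 * σ ^ 2)) := by
    intro m r hr hsub1 hsub2
    have hint := gaussPdf_integrable σ m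
    have hnn : 0 ≤ᵐ[volume] fun z => gaussPdf σ z m :=
      Filter.Eventually.of_forall (fun z => gaussPdf_nonneg σ z m)
    rw [hcompl, setIntegral_union hdisj measurableSet_Ioi hint.integrableOn hint.integrableOn]
    have h1 : ∫ z in Set.Iio (w - R), gaussPdf σ z m ≤ Real.exp (-r ^ 2 / (2 * σ ^ 2)) := by
      refine (setIntegral_mono_set hint.integrableOn (ae_restrict_of_ae hnn)
        (HasSubset.Subset.eventuallyLE hsub1)).trans ?_
      exact gaussPdf_tail_lower σ hσ m r hr
    have h2 : ∫ z in Set.Ioi (w + R), gaussPdf σ z m ≤ Real.exp (-r ^ 2 / (2 * σ ^ 2)) := by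
      refine (setIntegral_mono_set hint.integrableOn (ae_restrict_of_ae hnn)
        (HasSubset.Subset.eventuallyLE hsub2)).trans ?_
      exact gaussPdf_tail_upper σ hσ m r hr
    linarith
  have habs' : |wh - w| ≤ δ := hww
  have hw1 : wh - w ≤ δ := (abs_le.1 habs').2
  have hw2 : -δ ≤ wh - w := (abs_le.1 habs').1
  have htail : ∫ z in sᶜ, |gaussPdf σ z wh - gaussPdf σ z w| ≤
      2 * Real.exp (-(R - δ) ^ 2 / (2 * σ ^ 2)) + 2 * Real.exp (-R ^ 2 / (2 * σ ^ 2)) := by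
    have hstep : ∫ z in sᶜ, |gaussPdf σ z wh - gaussPdf σ z w| ≤
        ∫ z in sᶜ, (gaussPdf σ z wh + gaussPdf σ z w) := by
      apply setIntegral_mono_on hd.integrableOn (hi1.add hi2).integrableOn hms.compl
      intro z _
      exact habs z
    have hsplit : ∫ z in sᶜ, (gaussPdf σ z wh + gaussPdf σ z w)
        = (∫ z in sᶜ, gaussPdf σ z wh) + ∫ z in sᶜ, gaussPdf σ z w :=
      integral_add hi1.integrableOn hi2.integrableOn
    have t1 : ∫ z in sᶜ, gaussPdf σ z wh ≤ 2 * Real.exp (-(R - δ) ^ 2 / (2 * σ ^ 2)) := by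
      apply tail_bound wh (R - δ) (by linarith)
      · intro x hx
        simp only [Set.mem_Iio] at hx
        simp only [Set.mem_Iic]
        linarith
      · intro x hx
        simp only [Set.mem_Ioi] at hx
        simp only [Set.mem_Ici]
        linarith
    have t2 : ∫ z in sᶜ, gaussPdf σ z w ≤ 2 * Real.exp (-R ^ 2 / (2 * σ ^ 2)) := by
      apply tail_bound w R hR0
      · intro x hx
        simp only [Set.mem_Iio] at hx
        simp only [Set.mem_Iic]
        linarith
      · intro x hx
        simp only [Set.mem_Ioi] at hx
        simp only [Set.mem_Ici]
        linarith
    linarith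
  have hfinal : 2 * R * δ * C = 2 * R * δ * Real.exp (-1 / 2) / (σ * Real.sqrt (2 * Real.pi * σ ^ 2)) := by
    rw [hC]; ring
  linarith
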